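/- For all integers i ≥ j ≥ -1, the coefficient sequence of the polynomial A(i,j,t) = (1-t)^{i+2} Σ_{n≥0} t^n n^{j+1}(n+1)^{i-j} is unimodal. -/

import Mathlib

namespace AUnimodal

def T1 (N : ℕ) (f : ℕ → ℤ) : ℕ → ℤ
  | 0 => 0
  | k + 1 => (k + 1) * f (k + 1) + ((N : ℤ) + 1 - k) * f k

def T2 (N : ℕ) (f : ℕ → ℤ) : ℕ → ℤ
  | 0 => f 0
  | k + 1 => (k + 2) * f (k + 1) + ((N : ℤ) - k) * f k

theorem T1_succ (N : ℕ) (f : ℕ → ℤ) (k : ℕ) :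
    T1 N f (k + 1) = ((k : ℤ) + 1) * f (k + 1) + ((N : ℤ) + 1 - k) * f k := rfl

theorem T2_succ (N : ℕ) (f : ℕ → ℤ) (k : ℕ) :
    T2 N f (k + 1) = ((k : ℤ) + 2) * f (k + 1) + ((N : ℤ) - k) * f k := rfl

/-- The coefficient array. -/
def c : ℕ → ℕ → ℕ → ℤ :=
  fun a => a.rec (motive := fun _ => ℕ → ℕ → ℤ)
    (fun b => b.rec (motive := fun _ => ℕ → ℤ)
      (fun k => if k = 0 then 1 else 0)
      (fun b ih => T2 b ih))
    (fun a ih b => T1 (a + b) (ih b))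

theorem c_zero_zero (k : ℕ) : c 0 0 k = if k = 0 then 1 else 0 := rfl
theorem c_zero_succ (b : ℕ) : c 0 (b + 1) = T2 b (c 0 b) := rfl
theorem c_succ (a b : ℕ) : c (a + 1) b = T1 (a + b) (c a b) := rfl

open PowerSeries

noncomputable def S (a b : ℕ) : PowerSeries ℤ :=
  PowerSeries.mk fun n : ℕ => (n : ℤ) ^ a * ((n : ℤ) + 1) ^ b

noncomputable def A (a b : ℕ) : PowerSeries ℤ := (1 - X) ^ (a + b + 1) * S a b

theorem S_a_succ (a b : ℕ) : S (a + 1) b = X * d⁄dX ℤ (S a b) := by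
  ext n
  cases n with
  | zero => simp [S, coeff_zero_X_mul]
  | succ n =>
    rw [coeff_succ_X_mul, coeff_derivative]
    simp only [S, coeff_mk]
    push_cast
    ring

theorem S_b_succ (b : ℕ) : S 0 (b + 1) = d⁄dX ℤ (X * S 0 b) := by
  ext n
  rw [coeff_derivative, coeff_succ_X_mul]
  simp only [S, coeff_mk]
  push_cast
  ring

theorem D_one_sub_X (m : ℕ) :
    d⁄dX ℤ ((1 - X) ^ (m + 1)) = -(C (R := ℤ) (m + 1)) * (1 - X) ^ m := by
  rw [Derivation.leibniz_pow]
  have h1 : d⁄dX ℤ ((1 : PowerSeries ℤ) - X) = -1 := by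
    rw [Derivation.map_sub, derivative_X, Derivation.map_one_eq_zero, zero_sub]
  rw [h1]
  simp only [Nat.add_sub_cancel, smul_eq_mul, nsmul_eq_mul, map_add, map_one, map_natCast]
  push_cast
  ring

theorem A_a_succ (a b : ℕ) :
    A (a + 1) b = X * ((1 - X) * d⁄dX ℤ (A a b) + C (R := ℤ) ((a : ℤ) + b + 1) * A a b) := by
  have hD : d⁄dX ℤ ((1 - X) ^ (a + b + 1) * S a b) =
      (1 - X) ^ (a + b + 1) * d⁄dX ℤ (S a b) + S a b * (-(C (R := ℤ) ((a : ℤ) + b + 1)) * (1 - X) ^ (a + b)) := by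
    rw [Derivation.leibniz, smul_eq_mul, smul_eq_mul, D_one_sub_X]
    push_cast
    ring
  rw [A, A, S_a_succ, hD]
  have : (a + 1) + b + 1 = (a + b + 1) + 1 := by omega
  rw [this]
  ring

theorem A_b_succ (b : ℕ) :
    A 0 (b + 1) = (1 - X) * A 0 b +
      X * ((1 - X) * d⁄dX ℤ (A 0 b) + C (R := ℤ) ((b : ℤ) + 1) * A 0 b) := by
  have hD : d⁄dX ℤ ((1 - X) ^ (0 + b + 1) * S 0 b) =
      (1 - X) ^ (b + 1) * d⁄dX ℤ (S 0 b) + S 0 b * (-(C (R := ℤ) ((b : ℤ) + 1)) * (1 - X) ^ b) := by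
    have h2 : (0 + b + 1) = b + 1 := by omega
    rw [h2, Derivation.leibniz, smul_eq_mul, smul_eq_mul, D_one_sub_X]
  have hDX : d⁄dX ℤ (X * S 0 b) = X * d⁄dX ℤ (S 0 b) + S 0 b := by
    rw [Derivation.leibniz, smul_eq_mul, smul_eq_mul, derivative_X, mul_one]
  rw [A, A, S_b_succ, hDX, hD]
  have h1 : 0 + (b + 1) + 1 = (b + 1) + 1 := by omega
  have h2 : 0 + b + 1 = b + 1 := by omega
  rw [h1, h2]
  ring

theorem coeff_one_sub_X_mul (F : PowerSeries ℤ) (k : ℕ) :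
    coeff (R := ℤ) (k + 1) ((1 - X) * F) = coeff (R := ℤ) (k + 1) F - coeff (R := ℤ) k F := by
  rw [sub_mul, one_mul, map_sub, coeff_succ_X_mul]

theorem coeff_zero_one_sub_X_mul (F : PowerSeries ℤ) :
    coeff (R := ℤ) 0 ((1 - X) * F) = coeff (R := ℤ) 0 F := by
  rw [sub_mul, one_mul, map_sub, coeff_zero_X_mul, sub_zero]

theorem coeff_core (F : PowerSeries ℤ) (m : ℤ) (k : ℕ) :
    coeff (R := ℤ) k ((1 - X) * d⁄dX ℤ F + C (R := ℤ) m * F)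
      = ((k : ℤ) + 1) * coeff (R := ℤ) (k + 1) F + (m - k) * coeff (R := ℤ) k F := by
  cases k with
  | zero =>
    rw [map_add, coeff_zero_one_sub_X_mul, coeff_derivative, coeff_C_mul]
    push_cast
    ring
  | succ k =>
    rw [map_add, coeff_one_sub_X_mul, coeff_derivative, coeff_derivative, coeff_C_mul]
    push_cast
    ring

theorem coeff_A : ∀ a b k, coeff (R := ℤ) k (A a b) = c a b k := by
  intro a
  induction a with
  | zero =>
    intro b
    induction b with
    | zero =>
      intro k
      have h1 : A 0 0 = 1 := by
        have : S 0 0 = PowerSeries.mk fun _ => (1 : ℤ) := by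
          unfold S; ext n; simp
        rw [A, this]
        ext n
        cases n with
        | zero =>
          rw [pow_one, coeff_zero_one_sub_X_mul]
          simp
        | succ n =>
          rw [pow_one, coeff_one_sub_X_mul]
          simp
      rw [h1, c_zero_zero]
      cases k with
      | zero => simp
      | succ k => simp [coeff_one]
    | succ b ih =>
      intro k
      rw [A_b_succ, c_zero_succ]
      cases k with
      | zero =>
        rw [map_add, coeff_zero_one_sub_X_mul, coeff_zero_X_mul, add_zero, ih 0]
        rfl
      | succ k =>
        rw [map_add, coeff_one_sub_X_mul, coeff_succ_X_mul, coeff_core, ih, ih, T2_succ]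
        push_cast
        ring
  | succ a iha =>
    intro b k
    rw [A_a_succ, c_succ]
    cases k with
    | zero =>
      rw [coeff_zero_X_mul]
      rfl
    | succ k =>
      rw [coeff_succ_X_mul, coeff_core, iha, iha, T1_succ]
      push_cast
      ring

/-- Abstract "good sequence": nonnegative, log-concave, no internal zeros,
supported in `[0, N]`. -/
structure Good (N : ℕ) (f : ℕ → ℤ) : Prop where
  nonneg : ∀ k, 0 ≤ f k
  lc : ∀ k, f k * f (k + 2) ≤ f (k + 1) ^ 2
  niz : ∀ k m l, k ≤ m → m ≤ l → 0 < f k → 0 < f l → 0 < f m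
  supp : ∀ k, N < k → f k = 0

theorem Good.dist2 {N : ℕ} {f : ℕ → ℤ} (h : Good N f) (k : ℕ) :
    f k * f (k + 3) ≤ f (k + 1) * f (k + 2) := by
  rcases eq_or_lt_of_le (h.nonneg k) with h0 | h0
  · rw [← h0, zero_mul]; exact mul_nonneg (h.nonneg _) (h.nonneg _)
  rcases eq_or_lt_of_le (h.nonneg (k + 3)) with h3 | h3
  · rw [← h3, mul_zero]; exact mul_nonneg (h.nonneg _) (h.nonneg _)
  have h1 : 0 < f (k + 1) := h.niz k (k + 1) (k + 3) (by omega) (by omega) h0 h3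
  have h2 : 0 < f (k + 2) := h.niz k (k + 2) (k + 3) (by omega) (by omega) h0 h3
  have := h.lc k
  have := h.lc (k + 1)
  nlinarith [mul_pos h1 h2, h.nonneg k, h.nonneg (k + 3)]

/-- A good sequence is unimodal. -/
theorem Good.unimodal {N : ℕ} {f : ℕ → ℤ} (h : Good N f) :
    ∃ p : ℕ, (∀ a, a < p → f a ≤ f (a + 1)) ∧ (∀ a, p ≤ a → f (a + 1) ≤ f a) := by
  obtain ⟨p, hp, hmax⟩ := Finset.exists_max_image (Finset.range (N + 2)) f ⟨0, by simp⟩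
  have hpN : p < N + 2 := Finset.mem_range.mp hp
  have hmax' : ∀ a, f a ≤ f p := by
    intro a
    rcases lt_or_ge a (N + 2) with ha | ha
    · exact hmax a (Finset.mem_range.mpr ha)
    · rw [h.supp a (by omega)]
      exact le_trans (h.nonneg 0) (hmax 0 (by simp))
  refine ⟨p, ?_, ?_⟩
  · -- increasing part
    have key : ∀ d n, n + d + 1 = p → f n ≤ f (n + 1) := by
      intro d
      induction d with
      | zero => intro n hn; have : n + 1 = p := by omega
                rw [this]; exact hmax' n
      | succ d ih =>
        intro n hn
        have h2 : f (n + 1) ≤ f (n + 2) := ih (n + 1) (by omega)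
        rcases eq_or_lt_of_le (h.nonneg (n + 1)) with h1 | h1
        · -- f (n+1) = 0 : show f n = 0
          by_contra hc
          have hn0 : 0 < f n := lt_of_le_of_ne (h.nonneg n) (fun e => hc (by rw [← e, ← h1])) 
          have hp0 : 0 < f p := lt_of_lt_of_le hn0 (hmax' n)
          have := h.niz n (n + 1) p (by omega) (by omega) hn0 hp0
          omega
        · have hlc := h.lc n
          have h2' : 0 < f (n + 2) := lt_of_lt_of_le h1 h2
          have : f n * f (n + 2) ≤ f (n + 1) * f (n + 2) := by nlinarith
          exact le_of_mul_le_mul_right this h2'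
    intro a ha
    exact key (p - 1 - a) a (by omega)
  · -- decreasing part
    intro a ha
    induction a, ha using Nat.le_induction with
    | base =>
      rcases lt_or_ge (p + 1) (N + 2) with hc | hc
      · exact hmax (p + 1) (Finset.mem_range.mpr hc)
      · rw [h.supp (p + 1) (by omega)]; exact h.nonneg p
    | succ n hn ih =>
      rcases eq_or_lt_of_le (h.nonneg (n + 1)) with h1 | h1
      · -- f (n+1) = 0, show f (n+2) = 0
        have : f (n + 2) = 0 := by
          by_contra hc
          have h2 : 0 < f (n + 2) :=
            lt_of_le_of_ne (h.nonneg _) (Ne.symm hc)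
          have hp0 : 0 < f p := lt_of_lt_of_le h2 (hmax' (n + 2))
          have := h.niz p (n + 1) (n + 2) (by omega) (by omega) hp0 h2
          omega
        rw [this, ← h1]
      · have hlc := h.lc n
        have hn0 : 0 < f n := lt_of_lt_of_le h1 ih
        have : f n * f (n + 2) ≤ f n * f (n + 1) := by nlinarith
        exact le_of_mul_le_mul_left this hn0

theorem good_T1 {N : ℕ} {f : ℕ → ℤ} (h : Good N f) : Good (N + 1) (T1 N f) := by
  have hnn : ∀ k, 0 ≤ T1 N f k := by
    intro k
    match k with
    | 0 => simp [T1]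
    | k + 1 =>
      show 0 ≤ ((k : ℤ) + 1) * f (k + 1) + ((N : ℤ) + 1 - k) * f k
      rcases le_or_gt k N with hk | hk
      · have := h.nonneg k; have := h.nonneg (k + 1)
        have : (0:ℤ) ≤ ((N : ℤ) + 1 - k) := by
          have : (k:ℤ) ≤ N := by exact_mod_cast hk
          linarith
        positivity
      · rw [h.supp k hk, h.supp (k+1) (by omega)]; simp
  have hsupp : ∀ k, N + 1 < k → T1 N f k = 0 := by
    intro k hk
    match k, hk with
    | k + 1, hk =>
      show ((k : ℤ) + 1) * f (k + 1) + ((N : ℤ) + 1 - k) * f k = 0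
      rw [h.supp k (by omega), h.supp (k + 1) (by omega)]; ring
  -- from positivity of T1 value, extract a positive f value
  have hext : ∀ k, 0 < T1 N f k → (0 < f k ∨ (1 ≤ k ∧ 0 < f (k - 1))) ∧ k ≤ N + 1 := by
    intro k hk
    match k with
    | 0 => simp [T1] at hk
    | k + 1 =>
      have hk' : 0 < ((k : ℤ) + 1) * f (k + 1) + ((N : ℤ) + 1 - k) * f k := hk
      by_cases hbig : N + 1 < k + 1
      · rw [hsupp (k + 1) hbig] at hk; omega
      constructor
      · rcases lt_or_ge 0 (f (k + 1)) with hp | hp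
        · exact Or.inl hp
        · right
          refine ⟨by omega, ?_⟩
          have h1 : f (k + 1) = 0 := le_antisymm hp (h.nonneg _)
          rw [h1, mul_zero, zero_add] at hk'
          simp only [Nat.add_sub_cancel]
          rcases lt_or_ge 0 (f k) with hq | hq
          · exact hq
          · exfalso; nlinarith [h.nonneg k]
      · omega
  refine ⟨hnn, ?_, ?_, hsupp⟩
  · -- log-concavity
    intro k
    match k with
    | 0 => simpa [T1] using sq_nonneg (T1 N f 1)
    | k + 1 =>
      -- middle index m = k + 2
      rw [show k + 1 + 2 = (k + 2) + 1 from rfl, show k + 1 + 1 = (k + 1) + 1 from rfl,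
        T1_succ, T1_succ, T1_succ]
      push_cast
      rcases le_or_gt (k + 2) N with hm | hm
      · have hN : (k : ℤ) + 2 ≤ (N : ℤ) := by exact_mod_cast hm
        have e1 := h.lc (k + 1)  -- f(k+1) f(k+3) ≤ f(k+2)^2
        have e2 := h.lc k        -- f k f(k+2) ≤ f(k+1)^2
        have e3 := h.dist2 k     -- f k f(k+3) ≤ f(k+1) f(k+2)
        nlinarith [h.nonneg k, h.nonneg (k+1), h.nonneg (k+2), h.nonneg (k+3),
          sq_nonneg (f (k + 2) - f (k + 1)),
          mul_le_mul_of_nonneg_left e1 (by nlinarith : (0:ℤ) ≤ ((k:ℤ)+1) * ((k:ℤ)+3)),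
          mul_le_mul_of_nonneg_left e2 (by nlinarith : (0:ℤ) ≤ ((N:ℤ)+1-k) * ((N:ℤ)-1-k)),
          mul_le_mul_of_nonneg_left e3 (by nlinarith : (0:ℤ) ≤ ((N:ℤ)+1-k) * ((k:ℤ)+3))]
      · -- degenerate: f (k+2) = f (k+3) = 0, and f (k+2) = 0 kills d (k+3)
        have h2 : f (k + 2) = 0 := h.supp _ (by omega)
        have h3 : f (k + 3) = 0 := h.supp _ (by omega)
        rw [h2, h3]
        nlinarith [sq_nonneg (((N:ℤ) - (k:ℤ) - 1) * f (k + 1))]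
  · -- no internal zeros
    intro k m l hkm hml hk hl
    rcases eq_or_lt_of_le hkm with rfl | hkm'
    · exact hk
    rcases eq_or_lt_of_le hml with rfl | hml'
    · exact hl
    obtain ⟨hkf, _⟩ := hext k hk
    obtain ⟨hlf, hlN⟩ := hext l hl
    -- positive f at some k' ≤ k and some l' ≥ l - 1
    have hk' : ∃ k', k' ≤ k ∧ 0 < f k' := by
      rcases hkf with hp | ⟨h1, hp⟩
      · exact ⟨k, le_refl _, hp⟩
      · exact ⟨k - 1, by omega, hp⟩
    have hl' : ∃ l', l - 1 ≤ l' ∧ 0 < f l' := by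
      rcases hlf with hp | ⟨h1, hp⟩
      · exact ⟨l, by omega, hp⟩
      · exact ⟨l - 1, le_refl _, hp⟩
    obtain ⟨k', hk'le, hk'pos⟩ := hk'
    obtain ⟨l', hl'ge, hl'pos⟩ := hl'
    have hfm : 0 < f (m - 1) := h.niz k' (m - 1) l' (by omega) (by omega) hk'pos hl'pos
    -- m = (m-1) + 1
    obtain ⟨m', rfl⟩ : ∃ m', m = m' + 1 := ⟨m - 1, by omega⟩
    show 0 < ((m' : ℤ) + 1) * f (m' + 1) + ((N : ℤ) + 1 - m') * f m'
    have hm'N : (m' : ℤ) ≤ (N : ℤ) := by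
      have : m' + 1 < l := hml'
      have : m' ≤ N := by omega
      exact_mod_cast this
    have : 0 < ((N : ℤ) + 1 - m') * f m' := by
      apply mul_pos (by linarith)
      simpa using hfm
    nlinarith [h.nonneg (m' + 1)]

theorem good_T2 {N : ℕ} {f : ℕ → ℤ} (h : Good N f) : Good (N + 1) (T2 N f) := by
  have hnn : ∀ k, 0 ≤ T2 N f k := by
    intro k
    match k with
    | 0 => exact h.nonneg 0
    | k + 1 =>
      show 0 ≤ ((k : ℤ) + 2) * f (k + 1) + ((N : ℤ) - k) * f k
      rcases le_or_gt k N with hk | hk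
      · have h1 := h.nonneg k; have h2 := h.nonneg (k + 1)
        have h3 : (0:ℤ) ≤ ((N : ℤ) - k) := by
          have : (k:ℤ) ≤ N := by exact_mod_cast hk
          linarith
        positivity
      · rw [h.supp k hk, h.supp (k+1) (by omega)]; simp
  have hsupp : ∀ k, N + 1 < k → T2 N f k = 0 := by
    intro k hk
    match k, hk with
    | k + 1, hk =>
      show ((k : ℤ) + 2) * f (k + 1) + ((N : ℤ) - k) * f k = 0
      rw [h.supp k (by omega), h.supp (k + 1) (by omega)]; ring
  -- extraction: positive T2 value forces positive f nearby, and k ≤ N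
  have hext : ∀ k, 0 < T2 N f k → (0 < f k ∨ (1 ≤ k ∧ 0 < f (k - 1))) ∧ k ≤ N := by
    intro k hk
    match k with
    | 0 =>
      exact ⟨Or.inl hk, Nat.zero_le N⟩
    | k + 1 =>
      have hk' : 0 < ((k : ℤ) + 2) * f (k + 1) + ((N : ℤ) - k) * f k := hk
      have hkN : k + 1 ≤ N := by
        by_contra hc
        rcases lt_or_ge 0 (f (k + 1)) with hp | hp
        · have := h.supp (k + 1) (by omega); omega
        · have h1 : f (k + 1) = 0 := le_antisymm hp (h.nonneg _)
          rcases Nat.lt_or_ge k N with h2 | h2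
          · -- k < N ≤ k, contradiction with ¬ k+1 ≤ N
            omega
          · have h3 : f k = 0 ∨ k = N := by
              rcases Nat.lt_or_ge N k with h4 | h4
              · exact Or.inl (h.supp k h4)
              · exact Or.inr (by omega)
            rcases h3 with h3 | h3
            · rw [h1, h3] at hk'; simp at hk'
            · subst h3; rw [h1] at hk'; simp at hk'
      refine ⟨?_, hkN⟩
      rcases lt_or_ge 0 (f (k + 1)) with hp | hp
      · exact Or.inl hp
      · right
        refine ⟨by omega, ?_⟩
        have h1 : f (k + 1) = 0 := le_antisymm hp (h.nonneg _)
        rw [h1, mul_zero, zero_add] at hk'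
        simp only [Nat.add_sub_cancel]
        rcases lt_or_ge 0 (f k) with hq | hq
        · exact hq
        · exfalso; nlinarith [h.nonneg k]
  refine ⟨hnn, ?_, ?_, hsupp⟩
  · -- log-concavity
    intro k
    match k with
    | 0 =>
      rw [show (0:ℕ) + 2 = 1 + 1 from rfl, show (0:ℕ) + 1 = 0 + 1 from rfl,
        T2_succ, T2_succ, show T2 N f 0 = f 0 from rfl]
      push_cast
      have hN0 : (0:ℤ) ≤ (N:ℤ) := Int.natCast_nonneg N
      nlinarith [h.lc 0, mul_nonneg (h.nonneg 0) (h.nonneg 1), sq_nonneg (f 1),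
        sq_nonneg ((N:ℤ) * f 0), mul_nonneg (mul_nonneg hN0 (h.nonneg 0)) (h.nonneg 1)]
    | k + 1 =>
      rw [show k + 1 + 2 = (k + 2) + 1 from rfl, show k + 1 + 1 = (k + 1) + 1 from rfl,
        T2_succ, T2_succ, T2_succ]
      push_cast
      rcases le_or_gt (k + 2) N with hm | hm
      · have hN : (k : ℤ) + 2 ≤ (N : ℤ) := by exact_mod_cast hm
        have e1 := h.lc (k + 1)
        have e2 := h.lc k
        have e3 := h.dist2 k
        nlinarith [h.nonneg k, h.nonneg (k+1), h.nonneg (k+2), h.nonneg (k+3),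
          sq_nonneg (f (k + 2) - f (k + 1)),
          mul_le_mul_of_nonneg_left e1 (by nlinarith : (0:ℤ) ≤ ((k:ℤ)+1) * ((k:ℤ)+3)),
          mul_le_mul_of_nonneg_left e2 (by nlinarith : (0:ℤ) ≤ ((N:ℤ)-k) * ((N:ℤ)-2-k)),
          mul_le_mul_of_nonneg_left e3 (by nlinarith : (0:ℤ) ≤ ((N:ℤ)-k) * ((k:ℤ)+3))]
      · have h2 : f (k + 2) = 0 := h.supp _ (by omega)
        have h3 : f (k + 3) = 0 := h.supp _ (by omega)
        rw [h2, h3]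
        nlinarith [sq_nonneg (((N:ℤ) - (k:ℤ) - 1) * f (k + 1))]
  · -- no internal zeros
    intro k m l hkm hml hk hl
    rcases eq_or_lt_of_le hkm with rfl | hkm'
    · exact hk
    rcases eq_or_lt_of_le hml with rfl | hml'
    · exact hl
    obtain ⟨hkf, _⟩ := hext k hk
    obtain ⟨hlf, hlN⟩ := hext l hl
    have hk' : ∃ k', k' ≤ k ∧ 0 < f k' := by
      rcases hkf with hp | ⟨h1, hp⟩
      · exact ⟨k, le_refl _, hp⟩
      · exact ⟨k - 1, by omega, hp⟩
    have hl' : ∃ l', l - 1 ≤ l' ∧ 0 < f l' := by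
      rcases hlf with hp | ⟨h1, hp⟩
      · exact ⟨l, by omega, hp⟩
      · exact ⟨l - 1, le_refl _, hp⟩
    obtain ⟨k', hk'le, hk'pos⟩ := hk'
    obtain ⟨l', hl'ge, hl'pos⟩ := hl'
    have hfm : 0 < f (m - 1) := h.niz k' (m - 1) l' (by omega) (by omega) hk'pos hl'pos
    obtain ⟨m', rfl⟩ : ∃ m', m = m' + 1 := ⟨m - 1, by omega⟩
    show 0 < ((m' : ℤ) + 2) * f (m' + 1) + ((N : ℤ) - m') * f m'
    have hm'N : (m' : ℤ) + 1 ≤ (N : ℤ) := by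
      have : m' + 1 ≤ N := by omega
      exact_mod_cast this
    have : 0 < ((N : ℤ) - m') * f m' := by
      apply mul_pos (by linarith)
      simpa using hfm
    nlinarith [h.nonneg (m' + 1)]


theorem goodc : ∀ a b : ℕ, Good (a + b) (c a b) := by
  intro a
  induction a with
  | zero =>
    intro b
    induction b with
    | zero =>
      refine ⟨?_, ?_, ?_, ?_⟩
      · intro k; rw [c_zero_zero]; split <;> norm_num
      · intro k
        rw [c_zero_zero, c_zero_zero, c_zero_zero]
        have : ¬ (k + 2 = 0) := by omega
        rw [if_neg this, mul_zero]
        positivity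
      · intro k m l hkm hml hk hl
        rw [c_zero_zero] at hk hl ⊢
        by_cases h0 : l = 0
        · have hm0 : m = 0 := by omega
          rw [if_pos hm0]; norm_num
        · rw [if_neg h0] at hl; omega
      · intro k hk
        rw [c_zero_zero, if_neg (by omega)]
    | succ b ih =>
      have ih' : Good b (c 0 b) := by rwa [Nat.zero_add] at ih
      have h := good_T2 ih'
      rw [← c_zero_succ] at h
      rwa [Nat.zero_add]
  | succ a iha =>
    intro b
    have h := good_T1 (iha b)
    rw [← c_succ] at h
    have he : a + b + 1 = a + 1 + b := by omega
    rwa [he] at h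

end AUnimodal

/-- For all integers `i ≥ j ≥ -1`, the coefficient sequence of
`A(i,j,t) = (1-t)^{i+2} ∑_{n≥0} t^n n^{j+1}(n+1)^{i-j}` is unimodal. -/
theorem A_coefficients_unimodal (i j : ℤ) (hj : -1 ≤ j) (hij : j ≤ i) :
    ∃ p : ℕ,
      (∀ a, a < p →
        PowerSeries.coeff (R := ℤ) a ((1 - PowerSeries.X) ^ (i + 2).toNat *
          PowerSeries.mk (fun n : ℕ =>
            (n : ℤ) ^ (j + 1).toNat * ((n : ℤ) + 1) ^ (i - j).toNat))
          ≤ PowerSeries.coeff (R := ℤ) (a + 1) ((1 - PowerSeries.X) ^ (i + 2).toNat *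
              PowerSeries.mk (fun n : ℕ =>
                (n : ℤ) ^ (j + 1).toNat * ((n : ℤ) + 1) ^ (i - j).toNat))) ∧
      (∀ a, p ≤ a →
        PowerSeries.coeff (R := ℤ) (a + 1) ((1 - PowerSeries.X) ^ (i + 2).toNat *
          PowerSeries.mk (fun n : ℕ =>
            (n : ℤ) ^ (j + 1).toNat * ((n : ℤ) + 1) ^ (i - j).toNat))
          ≤ PowerSeries.coeff (R := ℤ) a ((1 - PowerSeries.X) ^ (i + 2).toNat *
              PowerSeries.mk (fun n : ℕ =>
                (n : ℤ) ^ (j + 1).toNat * ((n : ℤ) + 1) ^ (i - j).toNat))) := by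
  set a := (j + 1).toNat with ha
  set b := (i - j).toNat with hb
  have he : (i + 2).toNat = a + b + 1 := by omega
  have hS : (PowerSeries.mk (fun n : ℕ =>
      (n : ℤ) ^ (j + 1).toNat * ((n : ℤ) + 1) ^ (i - j).toNat)) = AUnimodal.S a b := rfl
  rw [he, hS]
  have hc : ∀ k : ℕ, PowerSeries.coeff (R := ℤ) k
      ((1 - PowerSeries.X) ^ (a + b + 1) * AUnimodal.S a b) = AUnimodal.c a b k := by
    intro k
    exact AUnimodal.coeff_A a b k
  obtain ⟨p, h1, h2⟩ := (AUnimodal.goodc a b).unimodal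
  refine ⟨p, ?_, ?_⟩
  · intro x hx; rw [hc, hc]; exact h1 x hx
  · intro x hx; rw [hc, hc]; exact h2 x hx
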